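/- (Perturbation bound for the weighted total least squares estimator.) Let A be a real symmetric positive definite p×p matrix with λ_min(ZᵀAZ) > λ_min(WᵀAW) (so that β̂(A) is well defined), let B be a real symmetric p×p matrix, and suppose Δ̂ := Δ̂(B,A) < 1. Then B is positive definite, β̂(B) is well defined, and ‖β̂(B) − β̂(A)‖ ≤ (2Δ̂/(1−Δ̂)) · UB(A). -/

import Mathlib

open Matrix
open scoped RealInnerProductSpace

/-- The spectral norm (operator 2-norm) of a real matrix. -/
noncomputable def spec {m n : ℕ} (M : Matrix (Fin m) (Fin n) ℝ) : ℝ :=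
  ‖LinearMap.toContinuousLinearMap (Matrix.toEuclideanLin M)‖

/-- The smallest (real) eigenvalue of a square real matrix: `sInf` of its real spectrum.
For a symmetric matrix this is the smallest eigenvalue. -/
noncomputable def lmin {n : ℕ} (M : Matrix (Fin n) (Fin n) ℝ) : ℝ :=
  sInf (spectrum ℝ M)

/-- The largest (real) eigenvalue of a square real matrix: `sSup` of its real spectrum. -/
noncomputable def lmax {n : ℕ} (M : Matrix (Fin n) (Fin n) ℝ) : ℝ :=
  sSup (spectrum ℝ M)

/-- The Euclidean norm of a vector in `ℝ^n`. -/
noncomputable def vnorm {n : ℕ} (v : Fin n → ℝ) : ℝ :=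
  Real.sqrt (∑ i, (v i) ^ 2)

/-- `W = (Z, y)`: the `p × (m+1)` matrix obtained by appending `y` as a last column to `Z`. -/
def appendCol {p m : ℕ} (Z : Matrix (Fin p) (Fin m) ℝ) (y : Fin p → ℝ) :
    Matrix (Fin p) (Fin (m + 1)) ℝ :=
  Matrix.of fun i j => Fin.lastCases (y i) (fun k => Z i k) j

/-- `γ(A) = ZᵀAZ − λ_min(WᵀAW)·I_m`. -/
noncomputable def gam {p m : ℕ} (Z : Matrix (Fin p) (Fin m) ℝ) (y : Fin p → ℝ)
    (A : Matrix (Fin p) (Fin p) ℝ) : Matrix (Fin m) (Fin m) ℝ :=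
  Zᵀ * A * Z - lmin ((appendCol Z y)ᵀ * A * appendCol Z y) • (1 : Matrix (Fin m) (Fin m) ℝ)

/-- `δ(A) = ZᵀAy`. -/
noncomputable def del {p m : ℕ} (Z : Matrix (Fin p) (Fin m) ℝ) (y : Fin p → ℝ)
    (A : Matrix (Fin p) (Fin p) ℝ) : Fin m → ℝ :=
  (Zᵀ * A) *ᵥ y

/-- The weighted total least squares estimator `β̂(A) = γ(A)⁻¹ δ(A)`. -/
noncomputable def betahat {p m : ℕ} (Z : Matrix (Fin p) (Fin m) ℝ) (y : Fin p → ℝ)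
    (A : Matrix (Fin p) (Fin p) ℝ) : Fin m → ℝ :=
  (gam Z y A)⁻¹ *ᵥ del Z y A

/-- `Δ̂(B,A) = [(λ_max(ZᵀAZ) + λ_max(WᵀAW))/(λ_min(ZᵀAZ) − λ_min(WᵀAW))] · ‖A⁻¹‖·‖B−A‖`. -/
noncomputable def Deltahat {p m : ℕ} (Z : Matrix (Fin p) (Fin m) ℝ) (y : Fin p → ℝ)
    (A B : Matrix (Fin p) (Fin p) ℝ) : ℝ :=
  (lmax (Zᵀ * A * Z) + lmax ((appendCol Z y)ᵀ * A * appendCol Z y)) /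
      (lmin (Zᵀ * A * Z) - lmin ((appendCol Z y)ᵀ * A * appendCol Z y)) *
    (spec A⁻¹ * spec (B - A))

/-- `UB(A) = λ_max(ZᵀAZ)^{1/2}·(yᵀAy)^{1/2}/(λ_min(ZᵀAZ) − λ_min(WᵀAW))`. -/
noncomputable def UB {p m : ℕ} (Z : Matrix (Fin p) (Fin m) ℝ) (y : Fin p → ℝ)
    (A : Matrix (Fin p) (Fin p) ℝ) : ℝ :=
  Real.sqrt (lmax (Zᵀ * A * Z)) * Real.sqrt (y ⬝ᵥ A *ᵥ y) /
    (lmin (Zᵀ * A * Z) - lmin ((appendCol Z y)ᵀ * A * appendCol Z y))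

section helpers

noncomputable def en {k : ℕ} (v : Fin k → ℝ) : ℝ := Real.sqrt (v ⬝ᵥ v)

noncomputable def ev {k : ℕ} (v : Fin k → ℝ) : EuclideanSpace ℝ (Fin k) :=
  (WithLp.equiv 2 _).symm v

lemma dp_nonneg {k : ℕ} (v : Fin k → ℝ) : 0 ≤ v ⬝ᵥ v :=
  Finset.sum_nonneg fun i _ => mul_self_nonneg _

lemma en_nonneg {k : ℕ} (v : Fin k → ℝ) : 0 ≤ en v := Real.sqrt_nonneg _

lemma en_sq {k : ℕ} (v : Fin k → ℝ) : en v * en v = v ⬝ᵥ v :=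
  Real.mul_self_sqrt (dp_nonneg v)

lemma ev_norm {k : ℕ} (v : Fin k → ℝ) : ‖ev v‖ = en v := by
  rw [EuclideanSpace.norm_eq]
  unfold en dotProduct
  congr 1
  refine Finset.sum_congr rfl fun i _ => ?_
  rw [Real.norm_eq_abs, sq_abs, sq]
  rfl

lemma ev_inner {k : ℕ} (v w : Fin k → ℝ) : (inner ℝ (ev v) (ev w) : ℝ) = v ⬝ᵥ w := by
  simp [ev, PiLp.inner_apply, RCLike.inner_apply, dotProduct, mul_comm]

lemma dp_le {k : ℕ} (v w : Fin k → ℝ) : v ⬝ᵥ w ≤ en v * en w := by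
  rw [← ev_inner, ← ev_norm, ← ev_norm]; exact real_inner_le_norm _ _

lemma abs_dp_le {k : ℕ} (v w : Fin k → ℝ) : |v ⬝ᵥ w| ≤ en v * en w := by
  rw [← ev_inner, ← ev_norm, ← ev_norm]; exact abs_real_inner_le_norm _ _

lemma spec_nonneg {a b : ℕ} (M : Matrix (Fin a) (Fin b) ℝ) : 0 ≤ spec M := norm_nonneg _

lemma spec_mulVec {a b : ℕ} (M : Matrix (Fin a) (Fin b) ℝ) (v : Fin b → ℝ) :
    en (M *ᵥ v) ≤ spec M * en v := by
  have h := (LinearMap.toContinuousLinearMap (Matrix.toEuclideanLin M)).le_opNorm (ev v)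
  have he : (LinearMap.toContinuousLinearMap (Matrix.toEuclideanLin M)) (ev v) = ev (M *ᵥ v) := by
    simp [ev]
  rw [he, ev_norm, ev_norm] at h
  exact h

lemma herm_of_symm {k : ℕ} {M : Matrix (Fin k) (Fin k) ℝ} (h : M.IsSymm) : M.IsHermitian := by
  rwa [Matrix.IsHermitian, Matrix.conjTranspose_eq_transpose_of_trivial]

lemma lmin_le_eig {k : ℕ} {M : Matrix (Fin k) (Fin k) ℝ} (hM : M.IsHermitian) (i : Fin k) :
    lmin M ≤ hM.eigenvalues i := by
  rw [lmin, hM.spectrum_real_eq_range_eigenvalues]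
  exact csInf_le (Set.Finite.bddBelow (Set.finite_range _)) ⟨i, rfl⟩

lemma eig_le_lmax {k : ℕ} {M : Matrix (Fin k) (Fin k) ℝ} (hM : M.IsHermitian) (i : Fin k) :
    hM.eigenvalues i ≤ lmax M := by
  rw [lmax, hM.spectrum_real_eq_range_eigenvalues]
  exact le_csSup (Set.Finite.bddAbove (Set.finite_range _)) ⟨i, rfl⟩

lemma dp_transpose {a b : ℕ} (M : Matrix (Fin a) (Fin b) ℝ) (x : Fin a → ℝ) (w : Fin b → ℝ) :
    x ⬝ᵥ (M *ᵥ w) = (Mᵀ *ᵥ x) ⬝ᵥ w := by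
  rw [Matrix.dotProduct_mulVec, Matrix.mulVec_transpose]

lemma dp_transpose' {a b : ℕ} (M : Matrix (Fin a) (Fin b) ℝ) (x : Fin b → ℝ) (w : Fin a → ℝ) :
    (M *ᵥ x) ⬝ᵥ w = x ⬝ᵥ (Mᵀ *ᵥ w) := by
  rw [dotProduct_comm, dp_transpose M w x, dotProduct_comm]

/-- quadratic form decomposition through the eigenbasis -/
lemma quad_lower {k : ℕ} {M : Matrix (Fin k) (Fin k) ℝ} (hM : M.IsHermitian)
    (x : Fin k → ℝ) :
    lmin M * (x ⬝ᵥ x) ≤ x ⬝ᵥ M *ᵥ x ∧ x ⬝ᵥ M *ᵥ x ≤ lmax M * (x ⬝ᵥ x) := by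
  classical
  set U : Matrix (Fin k) (Fin k) ℝ := (hM.eigenvectorUnitary : Matrix (Fin k) (Fin k) ℝ) with hU
  have hstar : star U = Uᵀ := Matrix.conjTranspose_eq_transpose_of_trivial U
  have hsp : M = U * Matrix.diagonal (RCLike.ofReal ∘ hM.eigenvalues) * Uᵀ := by
    rw [← hstar]; exact hM.spectral_theorem
  have hof : (RCLike.ofReal ∘ hM.eigenvalues : Fin k → ℝ) = hM.eigenvalues := rfl
  rw [hof] at hsp
  set c : Fin k → ℝ := Uᵀ *ᵥ x with hc
  have hUU : U * Uᵀ = 1 := by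
    have := (Matrix.mem_unitaryGroup_iff).mp hM.eigenvectorUnitary.2
    rwa [hstar] at this
  have e1 : M *ᵥ x = U *ᵥ (Matrix.diagonal hM.eigenvalues *ᵥ c) := by
    rw [hc, Matrix.mulVec_mulVec, Matrix.mulVec_mulVec, ← hsp]
  have hq : x ⬝ᵥ M *ᵥ x = ∑ i, hM.eigenvalues i * (c i * c i) := by
    rw [e1, dp_transpose, ← hc, Matrix.dotProduct_mulVec]
    unfold dotProduct
    refine Finset.sum_congr rfl fun i _ => ?_
    rw [Matrix.vecMul_diagonal]
    ring
  have hcc : c ⬝ᵥ c = x ⬝ᵥ x := by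
    rw [hc, dotProduct_comm, dp_transpose, Matrix.transpose_transpose,
      Matrix.mulVec_mulVec, hUU, Matrix.one_mulVec, dotProduct_comm]
  constructor
  · rw [hq, ← hcc]
    unfold dotProduct
    rw [Finset.mul_sum]
    exact Finset.sum_le_sum fun i _ =>
      mul_le_mul_of_nonneg_right (lmin_le_eig hM i) (mul_self_nonneg _)
  · rw [hq, ← hcc]
    unfold dotProduct
    rw [Finset.mul_sum]
    exact Finset.sum_le_sum fun i _ =>
      mul_le_mul_of_nonneg_right (eig_le_lmax hM i) (mul_self_nonneg _)

lemma exists_eigvec_lmin {k : ℕ} (hk : 0 < k) {M : Matrix (Fin k) (Fin k) ℝ}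
    (hM : M.IsHermitian) :
    ∃ v : Fin k → ℝ, v ⬝ᵥ v = 1 ∧ M *ᵥ v = lmin M • v := by
  obtain ⟨i₀, -, hi₀⟩ := Finset.exists_min_image Finset.univ hM.eigenvalues
    ⟨⟨0, hk⟩, Finset.mem_univ _⟩
  have hval : lmin M = hM.eigenvalues i₀ := by
    refine le_antisymm (lmin_le_eig hM i₀) ?_
    rw [lmin, hM.spectrum_real_eq_range_eigenvalues]
    refine le_csInf ⟨_, ⟨i₀, rfl⟩⟩ ?_
    rintro b ⟨j, rfl⟩
    exact hi₀ j (Finset.mem_univ _)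
  refine ⟨⇑(hM.eigenvectorBasis i₀), ?_, ?_⟩
  · have h1 : ‖hM.eigenvectorBasis i₀‖ = 1 := hM.eigenvectorBasis.orthonormal.1 i₀
    have := ev_inner (⇑(hM.eigenvectorBasis i₀)) (⇑(hM.eigenvectorBasis i₀))
    rw [← this]
    have hev : ev (⇑(hM.eigenvectorBasis i₀)) = hM.eigenvectorBasis i₀ := rfl
    rw [hev, real_inner_self_eq_norm_sq, h1]; norm_num
  · rw [hval]; exact hM.mulVec_eigenvectorBasis i₀

lemma dp_pos {k : ℕ} {x : Fin k → ℝ} (hx : x ≠ 0) : 0 < x ⬝ᵥ x := by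
  rcases (dp_nonneg x).lt_or_eq with h | h
  · exact h
  · exfalso
    apply hx
    funext i
    have h0 : ∀ i ∈ Finset.univ, (0:ℝ) ≤ x i * x i := fun i _ => mul_self_nonneg _
    have := (Finset.sum_eq_zero_iff_of_nonneg h0).mp h.symm i (Finset.mem_univ i)
    exact mul_self_eq_zero.mp this

lemma abs_quad_le_spec {k : ℕ} (C : Matrix (Fin k) (Fin k) ℝ) (x : Fin k → ℝ) :
    |x ⬝ᵥ C *ᵥ x| ≤ spec C * (x ⬝ᵥ x) := by
  calc |x ⬝ᵥ C *ᵥ x| ≤ en x * en (C *ᵥ x) := abs_dp_le _ _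
    _ ≤ en x * (spec C * en x) :=
        mul_le_mul_of_nonneg_left (spec_mulVec C x) (en_nonneg x)
    _ = spec C * (en x * en x) := by ring
    _ = spec C * (x ⬝ᵥ x) := by rw [en_sq]

lemma conj_quad {a b : ℕ} (M : Matrix (Fin a) (Fin b) ℝ) (C : Matrix (Fin a) (Fin a) ℝ)
    (x : Fin b → ℝ) : x ⬝ᵥ ((Mᵀ * C * M) *ᵥ x) = (M *ᵥ x) ⬝ᵥ (C *ᵥ (M *ᵥ x)) := by
  rw [← Matrix.mulVec_mulVec, ← Matrix.mulVec_mulVec, dp_transpose, Matrix.transpose_transpose]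

section sqrtdefs
open scoped MatrixOrder

noncomputable def Matrix.PosSemidef.sqrt {k : ℕ} {C : Matrix (Fin k) (Fin k) ℝ}
    (_hC : C.PosSemidef) : Matrix (Fin k) (Fin k) ℝ := CFC.sqrt C

lemma Matrix.PosSemidef.sqrt_mul_self {k : ℕ} {C : Matrix (Fin k) (Fin k) ℝ}
    (hC : C.PosSemidef) : hC.sqrt * hC.sqrt = C :=
  CFC.sqrt_mul_sqrt_self C (Matrix.nonneg_iff_posSemidef.mpr hC)

lemma Matrix.PosSemidef.posSemidef_sqrt {k : ℕ} {C : Matrix (Fin k) (Fin k) ℝ}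
    (hC : C.PosSemidef) : hC.sqrt.PosSemidef :=
  Matrix.nonneg_iff_posSemidef.mp (CFC.sqrt_nonneg C)

end sqrtdefs

/-- square-root facts for a positive definite matrix -/
lemma psd_quad_eq_sqrt {k : ℕ} {C : Matrix (Fin k) (Fin k) ℝ} (hC : C.PosSemidef)
    (v : Fin k → ℝ) : v ⬝ᵥ (C *ᵥ v) = (hC.sqrt *ᵥ v) ⬝ᵥ (hC.sqrt *ᵥ v) := by
  have hs : hC.sqrt * hC.sqrt = C := hC.sqrt_mul_self
  have hsym : hC.sqrtᵀ = hC.sqrt := by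
    have := hC.posSemidef_sqrt.isHermitian
    rwa [Matrix.IsHermitian, Matrix.conjTranspose_eq_transpose_of_trivial] at this
  conv_lhs => rw [← hs]
  rw [← Matrix.mulVec_mulVec, dp_transpose, hsym]

lemma psd_cauchy {k : ℕ} {C : Matrix (Fin k) (Fin k) ℝ} (hC : C.PosSemidef)
    (v w : Fin k → ℝ) :
    v ⬝ᵥ (C *ᵥ w) ≤ Real.sqrt (v ⬝ᵥ (C *ᵥ v)) * Real.sqrt (w ⬝ᵥ (C *ᵥ w)) := by
  have hs : hC.sqrt * hC.sqrt = C := hC.sqrt_mul_self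
  have hsym : hC.sqrtᵀ = hC.sqrt := by
    have := hC.posSemidef_sqrt.isHermitian
    rwa [Matrix.IsHermitian, Matrix.conjTranspose_eq_transpose_of_trivial] at this
  have h1 : v ⬝ᵥ (C *ᵥ w) = (hC.sqrt *ᵥ v) ⬝ᵥ (hC.sqrt *ᵥ w) := by
    conv_lhs => rw [← hs]
    rw [← Matrix.mulVec_mulVec, dp_transpose, hsym]
  rw [h1, psd_quad_eq_sqrt hC v, psd_quad_eq_sqrt hC w]
  calc (hC.sqrt *ᵥ v) ⬝ᵥ (hC.sqrt *ᵥ w) ≤ en (hC.sqrt *ᵥ v) * en (hC.sqrt *ᵥ w) := dp_le _ _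
    _ = _ := rfl

lemma dp_le_spec_inv {k : ℕ} {C : Matrix (Fin k) (Fin k) ℝ} (hC : C.PosDef)
    (v : Fin k → ℝ) : v ⬝ᵥ v ≤ spec C⁻¹ * (v ⬝ᵥ (C *ᵥ v)) := by
  set S := hC.posSemidef.sqrt with hSdef
  have hs : S * S = C := hC.posSemidef.sqrt_mul_self
  have hsym : Sᵀ = S := by
    have := hC.posSemidef.posSemidef_sqrt.isHermitian
    rwa [Matrix.IsHermitian, Matrix.conjTranspose_eq_transpose_of_trivial] at this
  have hdetC : IsUnit C.det := hC.det_pos.ne'.isUnit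
  have hdetS : IsUnit S.det := by
    have : S.det * S.det = C.det := by rw [← Matrix.det_mul, hs]
    rcases hdetC with ⟨u, hu⟩
    exact IsUnit.of_mul_eq_one (S.det * (↑u⁻¹ : ℝ)) (by
      rw [← mul_assoc, this, ← hu]
      simp)
  have hSS : S * S⁻¹ = 1 := Matrix.mul_nonsing_inv S hdetS
  have hSS' : S⁻¹ * S = 1 := Matrix.nonsing_inv_mul S hdetS
  have hCinv : C⁻¹ = S⁻¹ * S⁻¹ := by rw [← hs, Matrix.mul_inv_rev]
  have key : v ⬝ᵥ v = (S *ᵥ v) ⬝ᵥ (C⁻¹ *ᵥ (S *ᵥ v)) := by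
    have h2 : C⁻¹ *ᵥ (S *ᵥ v) = S⁻¹ *ᵥ v := by
      rw [hCinv, ← Matrix.mulVec_mulVec, Matrix.mulVec_mulVec (v := v), hSS',
        Matrix.one_mulVec]
    rw [h2, dp_transpose' S v (S⁻¹ *ᵥ v), hsym, Matrix.mulVec_mulVec, hSS,
      Matrix.one_mulVec]
  rw [key]
  calc (S *ᵥ v) ⬝ᵥ (C⁻¹ *ᵥ (S *ᵥ v)) ≤ en (S *ᵥ v) * en (C⁻¹ *ᵥ (S *ᵥ v)) := dp_le _ _
    _ ≤ en (S *ᵥ v) * (spec C⁻¹ * en (S *ᵥ v)) :=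
        mul_le_mul_of_nonneg_left (spec_mulVec _ _) (en_nonneg _)
    _ = spec C⁻¹ * ((S *ᵥ v) ⬝ᵥ (S *ᵥ v)) := by rw [← en_sq]; ring
    _ = spec C⁻¹ * (v ⬝ᵥ (C *ᵥ v)) := by rw [← psd_quad_eq_sqrt hC.posSemidef]

lemma quad_eig_lmin {k : ℕ} {M : Matrix (Fin k) (Fin k) ℝ} {v : Fin k → ℝ}
    (hv : v ⬝ᵥ v = 1) (he : M *ᵥ v = lmin M • v) : v ⬝ᵥ (M *ᵥ v) = lmin M := by
  rw [he, dotProduct_smul, hv, smul_eq_mul, mul_one]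

lemma weyl_lmin {k : ℕ} (hk : 0 < k) {P Q : Matrix (Fin k) (Fin k) ℝ}
    (hP : P.IsHermitian) (hQ : Q.IsHermitian) {K : ℝ}
    (hK : ∀ x : Fin k → ℝ, |x ⬝ᵥ ((Q - P) *ᵥ x)| ≤ K * (x ⬝ᵥ x)) :
    |lmin Q - lmin P| ≤ K := by
  have split : ∀ x : Fin k → ℝ, x ⬝ᵥ (Q *ᵥ x) = x ⬝ᵥ (P *ᵥ x) + x ⬝ᵥ ((Q - P) *ᵥ x) := by
    intro x
    rw [← dotProduct_add, ← Matrix.add_mulVec, add_sub_cancel]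
  rw [abs_le]
  constructor
  · -- lmin P - lmin Q ≤ K, use eigenvector of Q
    obtain ⟨v, hv1, hve⟩ := exists_eigvec_lmin hk hQ
    have h1 : lmin Q = v ⬝ᵥ (P *ᵥ v) + v ⬝ᵥ ((Q - P) *ᵥ v) := by
      rw [← split, quad_eig_lmin hv1 hve]
    have h2 : lmin P ≤ v ⬝ᵥ (P *ᵥ v) := by
      have := (quad_lower hP v).1
      rwa [hv1, mul_one] at this
    have h3 : -(K * (v ⬝ᵥ v)) ≤ v ⬝ᵥ ((Q - P) *ᵥ v) := neg_le_of_abs_le (hK v)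
    rw [hv1, mul_one] at h3
    linarith
  · -- lmin Q - lmin P ≤ K, use eigenvector of P
    obtain ⟨v, hv1, hve⟩ := exists_eigvec_lmin hk hP
    have h1 : v ⬝ᵥ (Q *ᵥ v) = lmin P + v ⬝ᵥ ((Q - P) *ᵥ v) := by
      rw [split, quad_eig_lmin hv1 hve]
    have h2 : lmin Q ≤ v ⬝ᵥ (Q *ᵥ v) := by
      have := (quad_lower hQ v).1
      rwa [hv1, mul_one] at this
    have h3 : v ⬝ᵥ ((Q - P) *ᵥ v) ≤ K * (v ⬝ᵥ v) := le_of_abs_le (hK v)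
    rw [hv1, mul_one] at h3
    linarith

lemma posdef_of_quad {k : ℕ} {C : Matrix (Fin k) (Fin k) ℝ} (hC : C.IsSymm)
    (h : ∀ x : Fin k → ℝ, x ≠ 0 → 0 < x ⬝ᵥ (C *ᵥ x)) : C.PosDef := by
  refine Matrix.PosDef.of_dotProduct_mulVec_pos (herm_of_symm hC) fun x hx => ?_
  have := h x hx
  simpa using this

lemma dp_transpose2 {a b : ℕ} (M : Matrix (Fin a) (Fin b) ℝ) (x : Fin b → ℝ) (w : Fin a → ℝ) :
    x ⬝ᵥ (Mᵀ *ᵥ w) = (M *ᵥ x) ⬝ᵥ w := by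
  rw [dp_transpose Mᵀ x w, Matrix.transpose_transpose]

lemma en_sub_le {k : ℕ} (a b : Fin k → ℝ) : en (a - b) ≤ en a + en b := by
  rw [← ev_norm, ← ev_norm, ← ev_norm]
  exact norm_sub_le _ _

lemma en_smul {k : ℕ} (c : ℝ) (v : Fin k → ℝ) : en (c • v) = |c| * en v := by
  rw [← ev_norm, ← ev_norm]
  have : ev (c • v) = c • ev v := rfl
  rw [this, norm_smul, Real.norm_eq_abs]

lemma quad_shift {k : ℕ} (C : Matrix (Fin k) (Fin k) ℝ) (c : ℝ) (x : Fin k → ℝ) :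
    x ⬝ᵥ ((C - c • (1 : Matrix (Fin k) (Fin k) ℝ)) *ᵥ x) = x ⬝ᵥ (C *ᵥ x) - c * (x ⬝ᵥ x) := by
  rw [Matrix.sub_mulVec, dotProduct_sub, Matrix.smul_mulVec, Matrix.one_mulVec,
    dotProduct_smul, smul_eq_mul]

lemma symm_conj {a b : ℕ} (M : Matrix (Fin a) (Fin b) ℝ) {C : Matrix (Fin a) (Fin a) ℝ}
    (hC : C.IsSymm) : (Mᵀ * C * M).IsSymm := by
  unfold Matrix.IsSymm
  rw [Matrix.transpose_mul, Matrix.transpose_mul, Matrix.transpose_transpose, hC,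
    Matrix.mul_assoc]

lemma symm_shift {k : ℕ} {C : Matrix (Fin k) (Fin k) ℝ} (hC : C.IsSymm) (c : ℝ) :
    (C - c • (1 : Matrix (Fin k) (Fin k) ℝ)).IsSymm := by
  unfold Matrix.IsSymm
  rw [Matrix.transpose_sub, Matrix.transpose_smul, Matrix.transpose_one, hC]

/-- conjugated quadratic perturbation bound -/
lemma keyW {pp k : ℕ} {A : Matrix (Fin pp) (Fin pp) ℝ} (hA : A.PosDef)
    (E : Matrix (Fin pp) (Fin pp) ℝ) (M : Matrix (Fin pp) (Fin k) ℝ) {L : ℝ}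
    (hL : ∀ x : Fin k → ℝ, x ⬝ᵥ ((Mᵀ * A * M) *ᵥ x) ≤ L * (x ⬝ᵥ x)) (x : Fin k → ℝ) :
    |x ⬝ᵥ ((Mᵀ * E * M) *ᵥ x)| ≤ (spec A⁻¹ * spec E * L) * (x ⬝ᵥ x) := by
  rw [conj_quad]
  calc |(M *ᵥ x) ⬝ᵥ (E *ᵥ (M *ᵥ x))| ≤ spec E * ((M *ᵥ x) ⬝ᵥ (M *ᵥ x)) :=
        abs_quad_le_spec E (M *ᵥ x)
    _ ≤ spec E * (spec A⁻¹ * ((M *ᵥ x) ⬝ᵥ (A *ᵥ (M *ᵥ x)))) :=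
        mul_le_mul_of_nonneg_left (dp_le_spec_inv hA (M *ᵥ x)) (spec_nonneg E)
    _ = (spec E * spec A⁻¹) * (x ⬝ᵥ ((Mᵀ * A * M) *ᵥ x)) := by rw [conj_quad]; ring
    _ ≤ (spec E * spec A⁻¹) * (L * (x ⬝ᵥ x)) :=
        mul_le_mul_of_nonneg_left (hL x) (mul_nonneg (spec_nonneg E) (spec_nonneg _))
    _ = (spec A⁻¹ * spec E * L) * (x ⬝ᵥ x) := by ring

lemma en_mulVec_of_quad {pp k : ℕ} {A : Matrix (Fin pp) (Fin pp) ℝ} (hA : A.PosDef)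
    (M : Matrix (Fin pp) (Fin k) ℝ) {L : ℝ} (hL0 : 0 ≤ L)
    (hL : ∀ x : Fin k → ℝ, x ⬝ᵥ ((Mᵀ * A * M) *ᵥ x) ≤ L * (x ⬝ᵥ x)) (w : Fin k → ℝ) :
    en (M *ᵥ w) ≤ Real.sqrt (spec A⁻¹ * L) * en w := by
  have hsq : en (M *ᵥ w) * en (M *ᵥ w) ≤ (spec A⁻¹ * L) * (en w * en w) := by
    rw [en_sq, en_sq]
    calc (M *ᵥ w) ⬝ᵥ (M *ᵥ w) ≤ spec A⁻¹ * ((M *ᵥ w) ⬝ᵥ (A *ᵥ (M *ᵥ w))) :=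
          dp_le_spec_inv hA (M *ᵥ w)
      _ = spec A⁻¹ * (w ⬝ᵥ ((Mᵀ * A * M) *ᵥ w)) := by rw [conj_quad]
      _ ≤ spec A⁻¹ * (L * (w ⬝ᵥ w)) := mul_le_mul_of_nonneg_left (hL w) (spec_nonneg _)
      _ = (spec A⁻¹ * L) * (w ⬝ᵥ w) := by ring
  have h1 : en (M *ᵥ w) = Real.sqrt (en (M *ᵥ w) * en (M *ᵥ w)) :=
    (Real.sqrt_mul_self (en_nonneg _)).symm
  rw [h1]
  calc Real.sqrt (en (M *ᵥ w) * en (M *ᵥ w)) ≤ Real.sqrt ((spec A⁻¹ * L) * (en w * en w)) :=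
        Real.sqrt_le_sqrt hsq
    _ = Real.sqrt (spec A⁻¹ * L) * en w := by
        rw [Real.sqrt_mul (mul_nonneg (spec_nonneg _) hL0),
          Real.sqrt_mul_self (en_nonneg w)]

lemma keyV {pp k : ℕ} {A : Matrix (Fin pp) (Fin pp) ℝ} (hA : A.PosDef)
    (E : Matrix (Fin pp) (Fin pp) ℝ) (M : Matrix (Fin pp) (Fin k) ℝ) {L : ℝ} (hL0 : 0 ≤ L)
    (hL : ∀ x : Fin k → ℝ, x ⬝ᵥ ((Mᵀ * A * M) *ᵥ x) ≤ L * (x ⬝ᵥ x)) (v : Fin k → ℝ) :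
    en ((Mᵀ * E * M) *ᵥ v) ≤ (spec A⁻¹ * spec E * L) * en v := by
  set u : Fin k → ℝ := (Mᵀ * E * M) *ᵥ v with hu
  have h0 : (Mᵀ * E * M) *ᵥ v = Mᵀ *ᵥ (E *ᵥ (M *ᵥ v)) := by
    rw [← Matrix.mulVec_mulVec, ← Matrix.mulVec_mulVec]
  have hq : u ⬝ᵥ u = (M *ᵥ u) ⬝ᵥ (E *ᵥ (M *ᵥ v)) := by
    conv_lhs => rw [hu, h0]
    rw [dp_transpose2, ← h0, ← hu]
  have hMu := en_mulVec_of_quad hA M hL0 hL u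
  have hMv := en_mulVec_of_quad hA M hL0 hL v
  have hss : Real.sqrt (spec A⁻¹ * L) * Real.sqrt (spec A⁻¹ * L) = spec A⁻¹ * L :=
    Real.mul_self_sqrt (mul_nonneg (spec_nonneg _) hL0)
  have hK0 : 0 ≤ spec A⁻¹ * spec E * L :=
    mul_nonneg (mul_nonneg (spec_nonneg _) (spec_nonneg _)) hL0
  have hbound : en u * en u ≤ (spec A⁻¹ * spec E * L) * (en u * en v) := by
    rw [en_sq, hq]
    calc (M *ᵥ u) ⬝ᵥ (E *ᵥ (M *ᵥ v)) ≤ en (M *ᵥ u) * en (E *ᵥ (M *ᵥ v)) := dp_le _ _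
      _ ≤ en (M *ᵥ u) * (spec E * en (M *ᵥ v)) :=
          mul_le_mul_of_nonneg_left (spec_mulVec _ _) (en_nonneg _)
      _ ≤ (Real.sqrt (spec A⁻¹ * L) * en u) * (spec E * (Real.sqrt (spec A⁻¹ * L) * en v)) := by
          apply mul_le_mul hMu
          · exact mul_le_mul_of_nonneg_left hMv (spec_nonneg E)
          · exact mul_nonneg (spec_nonneg E) (en_nonneg _)
          · exact mul_nonneg (Real.sqrt_nonneg _) (en_nonneg _)
      _ = (Real.sqrt (spec A⁻¹ * L) * Real.sqrt (spec A⁻¹ * L)) * spec E * (en u * en v) := by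
          ring
      _ = (spec A⁻¹ * spec E * L) * (en u * en v) := by rw [hss]; ring
  rcases eq_or_lt_of_le (en_nonneg u) with h | h
  · rw [← h]
    exact mul_nonneg hK0 (en_nonneg v)
  · have := (mul_le_mul_iff_of_pos_left h).mp (by linarith [hbound] : en u * en u ≤ en u * ((spec A⁻¹ * spec E * L) * en v))
    linarith

lemma psd_quad_nonneg {k : ℕ} {C : Matrix (Fin k) (Fin k) ℝ} (hC : C.PosSemidef)
    (w : Fin k → ℝ) : 0 ≤ w ⬝ᵥ (C *ᵥ w) := by
  have := hC.dotProduct_mulVec_nonneg w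
  simpa using this

lemma keyD {pp k : ℕ} {A : Matrix (Fin pp) (Fin pp) ℝ} (hA : A.PosDef)
    (E : Matrix (Fin pp) (Fin pp) ℝ) (M : Matrix (Fin pp) (Fin k) ℝ) {L : ℝ} (hL0 : 0 ≤ L)
    (hL : ∀ x : Fin k → ℝ, x ⬝ᵥ ((Mᵀ * A * M) *ᵥ x) ≤ L * (x ⬝ᵥ x)) (w : Fin pp → ℝ) :
    en (Mᵀ *ᵥ (E *ᵥ w)) ≤
      (spec A⁻¹ * spec E) * (Real.sqrt L * Real.sqrt (w ⬝ᵥ (A *ᵥ w))) := by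
  set u : Fin k → ℝ := Mᵀ *ᵥ (E *ᵥ w) with hu
  have hwAw : 0 ≤ w ⬝ᵥ (A *ᵥ w) := psd_quad_nonneg hA.posSemidef w
  have h0 : u ⬝ᵥ u = (M *ᵥ u) ⬝ᵥ (E *ᵥ w) := by
    conv_lhs => rw [hu]
    rw [dp_transpose2, ← hu]
  have hMu := en_mulVec_of_quad hA M hL0 hL u
  have hw : en w ≤ Real.sqrt (spec A⁻¹ * (w ⬝ᵥ (A *ᵥ w))) := by
    have h1 : en w = Real.sqrt (w ⬝ᵥ w) := rfl
    rw [h1]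
    exact Real.sqrt_le_sqrt (dp_le_spec_inv hA w)
  have hbound : en u * en u ≤
      en u * ((spec A⁻¹ * spec E) * (Real.sqrt L * Real.sqrt (w ⬝ᵥ (A *ᵥ w)))) := by
    rw [en_sq, h0]
    calc (M *ᵥ u) ⬝ᵥ (E *ᵥ w) ≤ en (M *ᵥ u) * en (E *ᵥ w) := dp_le _ _
      _ ≤ (Real.sqrt (spec A⁻¹ * L) * en u) * (spec E * en w) := by
          apply mul_le_mul hMu (spec_mulVec E w) (en_nonneg _)
          exact mul_nonneg (Real.sqrt_nonneg _) (en_nonneg _)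
      _ ≤ (Real.sqrt (spec A⁻¹ * L) * en u) *
            (spec E * Real.sqrt (spec A⁻¹ * (w ⬝ᵥ (A *ᵥ w)))) := by
          apply mul_le_mul_of_nonneg_left
            (mul_le_mul_of_nonneg_left hw (spec_nonneg E))
            (mul_nonneg (Real.sqrt_nonneg _) (en_nonneg _))
      _ = en u * (Real.sqrt (spec A⁻¹ * L) * Real.sqrt (spec A⁻¹ * (w ⬝ᵥ (A *ᵥ w))) * spec E) := by
          ring
      _ = en u * ((spec A⁻¹ * spec E) * (Real.sqrt L * Real.sqrt (w ⬝ᵥ (A *ᵥ w)))) := by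
          rw [Real.sqrt_mul (spec_nonneg _), Real.sqrt_mul (spec_nonneg _) (w ⬝ᵥ (A *ᵥ w))]
          rw [show Real.sqrt (spec A⁻¹) * Real.sqrt L *
                (Real.sqrt (spec A⁻¹) * Real.sqrt (w ⬝ᵥ (A *ᵥ w))) * spec E =
              (Real.sqrt (spec A⁻¹) * Real.sqrt (spec A⁻¹)) *
                (Real.sqrt L * Real.sqrt (w ⬝ᵥ (A *ᵥ w))) * spec E from by ring]
          rw [Real.mul_self_sqrt (spec_nonneg _)]
          ring
  rcases eq_or_lt_of_le (en_nonneg u) with h | h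
  · rw [← h]
    exact mul_nonneg (mul_nonneg (spec_nonneg _) (spec_nonneg _))
      (mul_nonneg (Real.sqrt_nonneg _) (Real.sqrt_nonneg _))
  · exact (mul_le_mul_iff_of_pos_left h).mp hbound

lemma vnorm_eq_en' {k : ℕ} (v : Fin k → ℝ) : Real.sqrt (∑ i, (v i) ^ 2) = en v := by
  unfold en dotProduct
  congr 1
  exact Finset.sum_congr rfl fun i _ => by rw [sq]


end helpers

set_option maxHeartbeats 1000000 in
/-- Perturbation bound for the weighted total least squares estimator: if `A` is
symmetric positive definite with `λ_min(ZᵀAZ) > λ_min(WᵀAW)` (so `β̂(A)` is well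
defined), `B` is symmetric, and `Δ̂ = Δ̂(B,A) < 1`, then `B` is positive definite,
`β̂(B)` is well defined, and `‖β̂(B) − β̂(A)‖ ≤ (2Δ̂/(1−Δ̂))·UB(A)`. -/
theorem stmt6 {p m : ℕ} (hp : 0 < p) (hm : 0 < m)
    (Z : Matrix (Fin p) (Fin m) ℝ) (y : Fin p → ℝ)
    (A B : Matrix (Fin p) (Fin p) ℝ) (hA : A.PosDef) (hBsymm : B.IsSymm)
    (hgap : lmin ((appendCol Z y)ᵀ * A * appendCol Z y) < lmin (Zᵀ * A * Z))
    (hD : Deltahat Z y A B < 1) :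
    B.PosDef ∧ IsUnit (gam Z y B).det ∧
      vnorm (betahat Z y B - betahat Z y A) ≤
        2 * Deltahat Z y A B / (1 - Deltahat Z y A B) * UB Z y A := by
  classical
  have hm1 : 0 < m + 1 := Nat.succ_pos m
  set W := appendCol Z y with hWdef
  set E := B - A with hEdef
  have hAh : A.IsHermitian := hA.1
  have hAsymm : A.IsSymm := by
    rwa [Matrix.IsHermitian, Matrix.conjTranspose_eq_transpose_of_trivial] at hAh
  have hSZsymm : (Zᵀ * A * Z).IsSymm := symm_conj Z hAsymm
  have hSWsymm : (Wᵀ * A * W).IsSymm := symm_conj W hAsymm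
  have hSZh : (Zᵀ * A * Z).IsHermitian := herm_of_symm hSZsymm
  have hSWh : (Wᵀ * A * W).IsHermitian := herm_of_symm hSWsymm
  set lZ := lmin (Zᵀ * A * Z) with hlZ
  set LZ := lmax (Zᵀ * A * Z) with hLZdef
  set lA' := lmin (Wᵀ * A * W) with hlA
  set LW := lmax (Wᵀ * A * W) with hLWdef
  set e := spec A⁻¹ * spec E with hedef
  set Δ := Deltahat Z y A B with hΔdef
  have hg : 0 < lZ - lA' := sub_pos.mpr hgap
  have hΔeq : Δ = (LZ + LW) / (lZ - lA') * e := rfl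
  have qSZlow : ∀ x : Fin m → ℝ, lZ * (x ⬝ᵥ x) ≤ x ⬝ᵥ ((Zᵀ * A * Z) *ᵥ x) :=
    fun x => (quad_lower hSZh x).1
  have qSZup : ∀ x : Fin m → ℝ, x ⬝ᵥ ((Zᵀ * A * Z) *ᵥ x) ≤ LZ * (x ⬝ᵥ x) :=
    fun x => (quad_lower hSZh x).2
  have qSWup : ∀ x : Fin (m+1) → ℝ, x ⬝ᵥ ((Wᵀ * A * W) *ᵥ x) ≤ LW * (x ⬝ᵥ x) :=
    fun x => (quad_lower hSWh x).2
  have hlA0 : 0 ≤ lA' := by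
    obtain ⟨v, hv1, hve⟩ := exists_eigvec_lmin hm1 hSWh
    have h1 := quad_eig_lmin hv1 hve
    have h2 : 0 ≤ v ⬝ᵥ ((Wᵀ * A * W) *ᵥ v) := by
      rw [conj_quad]
      exact psd_quad_nonneg hA.posSemidef _
    rw [hlA, ← h1]
    exact h2
  have hlZLZ : lZ ≤ LZ := by
    obtain ⟨v, hv1, hve⟩ := exists_eigvec_lmin hm hSZh
    have h1 := quad_eig_lmin hv1 hve
    have h2 := (quad_lower hSZh v).2
    rw [h1, hv1, mul_one] at h2
    exact h2
  have hlALW : lA' ≤ LW := by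
    obtain ⟨v, hv1, hve⟩ := exists_eigvec_lmin hm1 hSWh
    have h1 := quad_eig_lmin hv1 hve
    have h2 := (quad_lower hSWh v).2
    rw [h1, hv1, mul_one] at h2
    exact h2
  have hLZ0 : 0 < LZ := by linarith
  have hLW0 : 0 ≤ LW := le_trans hlA0 hlALW
  have hgle : lZ - lA' ≤ LZ + LW := by linarith
  have he0 : 0 ≤ e := mul_nonneg (spec_nonneg _) (spec_nonneg _)
  have hr1 : 1 ≤ (LZ + LW) / (lZ - lA') := (one_le_div hg).mpr hgle
  have hΔ0 : 0 ≤ Δ := by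
    rw [hΔeq]
    exact mul_nonneg (by linarith) he0
  have heΔ : e ≤ Δ := by
    rw [hΔeq]
    exact le_mul_of_one_le_left he0 hr1
  have he1 : e < 1 := lt_of_le_of_lt heΔ hD
  have hΔg : e * (LZ + LW) = Δ * (lZ - lA') := by
    rw [hΔeq]
    field_simp
  -- B is positive definite
  have hBpos : B.PosDef := by
    apply posdef_of_quad hBsymm
    intro x hx
    have hsplit : x ⬝ᵥ (B *ᵥ x) = x ⬝ᵥ (A *ᵥ x) + x ⬝ᵥ (E *ᵥ x) := by
      rw [hEdef, ← dotProduct_add, ← Matrix.add_mulVec, add_sub_cancel]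
    have h1 : |x ⬝ᵥ (E *ᵥ x)| ≤ spec E * (x ⬝ᵥ x) := abs_quad_le_spec E x
    have h2 := dp_le_spec_inv hA x
    have h3 : 0 < x ⬝ᵥ (A *ᵥ x) := by
      have := hA.dotProduct_mulVec_pos hx
      simpa using this
    have h4 : spec E * (x ⬝ᵥ x) ≤ spec E * (spec A⁻¹ * (x ⬝ᵥ (A *ᵥ x))) :=
      mul_le_mul_of_nonneg_left h2 (spec_nonneg E)
    have h5 : -(x ⬝ᵥ (E *ᵥ x)) ≤ spec E * (x ⬝ᵥ x) := by
      have := neg_abs_le (x ⬝ᵥ (E *ᵥ x))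
      linarith
    have h6 : spec E * (spec A⁻¹ * (x ⬝ᵥ (A *ᵥ x))) = e * (x ⬝ᵥ (A *ᵥ x)) := by
      rw [hedef]; ring
    nlinarith [mul_pos (sub_pos.mpr he1) h3]
  -- perturbation of the smallest eigenvalue of Wᵀ • W
  have hSWBsymm : (Wᵀ * B * W).IsSymm := symm_conj W hBsymm
  have hSWBh : (Wᵀ * B * W).IsHermitian := herm_of_symm hSWBsymm
  set lB := lmin (Wᵀ * B * W) with hlB
  have hdiffW : Wᵀ * B * W - Wᵀ * A * W = Wᵀ * E * W := by
    rw [hEdef, Matrix.mul_sub, Matrix.sub_mul]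
  have hWeyl : |lB - lA'| ≤ e * LW := by
    rw [hlB, hlA, hedef]
    apply weyl_lmin hm1 hSWh hSWBh
    intro x
    rw [hdiffW]
    exact keyW hA E W qSWup x
  -- gamma A
  have hgamAeq : gam Z y A = (Zᵀ * A * Z) - lA' • 1 := rfl
  have qgamA : ∀ x : Fin m → ℝ, (lZ - lA') * (x ⬝ᵥ x) ≤ x ⬝ᵥ (gam Z y A *ᵥ x) := by
    intro x
    rw [hgamAeq, quad_shift]
    have h := qSZlow x
    nlinarith [h]
  have hgamApos : (gam Z y A).PosDef := by
    apply posdef_of_quad (by rw [hgamAeq]; exact symm_shift hSZsymm _)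
    intro x hx
    exact lt_of_lt_of_le (mul_pos hg (dp_pos hx)) (qgamA x)
  have hdetA : IsUnit (gam Z y A).det := hgamApos.det_pos.ne'.isUnit
  -- gamma B and the perturbation D
  have hgamBeq : gam Z y B = (Zᵀ * B * Z) - lB • 1 := rfl
  have hdiffZ : Zᵀ * B * Z - Zᵀ * A * Z = Zᵀ * E * Z := by
    rw [hEdef, Matrix.mul_sub, Matrix.sub_mul]
  have hDeq : gam Z y B - gam Z y A = (Zᵀ * E * Z) - (lB - lA') • 1 := by
    rw [hgamBeq, hgamAeq, sub_smul, ← hdiffZ]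
    abel
  have qD : ∀ x : Fin m → ℝ,
      |x ⬝ᵥ ((gam Z y B - gam Z y A) *ᵥ x)| ≤ (Δ * (lZ - lA')) * (x ⬝ᵥ x) := by
    intro x
    rw [hDeq, quad_shift]
    have h1 := keyW hA E Z qSZup x
    have h2 : |(lB - lA') * (x ⬝ᵥ x)| ≤ (e * LW) * (x ⬝ᵥ x) := by
      rw [abs_mul, abs_of_nonneg (dp_nonneg x)]
      exact mul_le_mul_of_nonneg_right hWeyl (dp_nonneg x)
    calc |x ⬝ᵥ ((Zᵀ * E * Z) *ᵥ x) - (lB - lA') * (x ⬝ᵥ x)|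
        ≤ |x ⬝ᵥ ((Zᵀ * E * Z) *ᵥ x)| + |(lB - lA') * (x ⬝ᵥ x)| := abs_sub _ _
      _ ≤ (spec A⁻¹ * spec E * LZ) * (x ⬝ᵥ x) + (e * LW) * (x ⬝ᵥ x) := add_le_add h1 h2
      _ = (e * (LZ + LW)) * (x ⬝ᵥ x) := by rw [hedef]; ring
      _ = (Δ * (lZ - lA')) * (x ⬝ᵥ x) := by rw [hΔg]
  have qgamB : ∀ x : Fin m → ℝ,
      ((1 - Δ) * (lZ - lA')) * (x ⬝ᵥ x) ≤ x ⬝ᵥ (gam Z y B *ᵥ x) := by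
    intro x
    have hsplit : x ⬝ᵥ (gam Z y B *ᵥ x) =
        x ⬝ᵥ (gam Z y A *ᵥ x) + x ⬝ᵥ ((gam Z y B - gam Z y A) *ᵥ x) := by
      rw [← dotProduct_add, ← Matrix.add_mulVec, add_sub_cancel]
    have h1 := qgamA x
    have h2 := qD x
    have h3 : -((Δ * (lZ - lA')) * (x ⬝ᵥ x)) ≤ x ⬝ᵥ ((gam Z y B - gam Z y A) *ᵥ x) := by
      have := neg_abs_le (x ⬝ᵥ ((gam Z y B - gam Z y A) *ᵥ x))
      linarith
    rw [show ((1 - Δ) * (lZ - lA')) * (x ⬝ᵥ x) =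
      (lZ - lA') * (x ⬝ᵥ x) - (Δ * (lZ - lA')) * (x ⬝ᵥ x) from by ring]
    linarith
  have hgamBpos : (gam Z y B).PosDef := by
    apply posdef_of_quad (by rw [hgamBeq]; exact symm_shift (symm_conj Z hBsymm) _)
    intro x hx
    exact lt_of_lt_of_le (mul_pos (mul_pos (by linarith) hg) (dp_pos hx)) (qgamB x)
  have hdetB : IsUnit (gam Z y B).det := hgamBpos.det_pos.ne'.isUnit
  refine ⟨hBpos, hdetB, ?_⟩
  -- bound on betahat A
  set b := betahat Z y A with hbdef
  have hsolveA : gam Z y A *ᵥ b = del Z y A := by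
    rw [hbdef, betahat, Matrix.mulVec_mulVec, Matrix.mul_nonsing_inv _ hdetA,
      Matrix.one_mulVec]
  have hsolveB : gam Z y B *ᵥ betahat Z y B = del Z y B := by
    rw [betahat, Matrix.mulVec_mulVec, Matrix.mul_nonsing_inv _ hdetB, Matrix.one_mulVec]
  have hUBeq : UB Z y A = Real.sqrt LZ * Real.sqrt (y ⬝ᵥ (A *ᵥ y)) / (lZ - lA') := rfl
  have hUB0 : 0 ≤ UB Z y A := by
    rw [hUBeq]
    exact div_nonneg (mul_nonneg (Real.sqrt_nonneg _) (Real.sqrt_nonneg _)) hg.le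
  have hXg : Real.sqrt LZ * Real.sqrt (y ⬝ᵥ (A *ᵥ y)) = (lZ - lA') * UB Z y A := by
    rw [hUBeq]
    field_simp
  have hdelA : del Z y A = Zᵀ *ᵥ (A *ᵥ y) := by
    rw [del, ← Matrix.mulVec_mulVec]
  have hbb : (lZ - lA') * (en b * en b) ≤
      Real.sqrt LZ * Real.sqrt (y ⬝ᵥ (A *ᵥ y)) * en b := by
    rw [en_sq]
    calc (lZ - lA') * (b ⬝ᵥ b) ≤ b ⬝ᵥ (gam Z y A *ᵥ b) := qgamA b
      _ = b ⬝ᵥ del Z y A := by rw [hsolveA]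
      _ = (Z *ᵥ b) ⬝ᵥ (A *ᵥ y) := by rw [hdelA, dp_transpose2]
      _ ≤ Real.sqrt ((Z *ᵥ b) ⬝ᵥ (A *ᵥ (Z *ᵥ b))) * Real.sqrt (y ⬝ᵥ (A *ᵥ y)) :=
          psd_cauchy hA.posSemidef _ _
      _ ≤ Real.sqrt (LZ * (b ⬝ᵥ b)) * Real.sqrt (y ⬝ᵥ (A *ᵥ y)) := by
          apply mul_le_mul_of_nonneg_right _ (Real.sqrt_nonneg _)
          apply Real.sqrt_le_sqrt
          rw [← conj_quad]
          exact qSZup b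
      _ = Real.sqrt LZ * Real.sqrt (y ⬝ᵥ (A *ᵥ y)) * en b := by
          rw [Real.sqrt_mul hLZ0.le]
          have : Real.sqrt (b ⬝ᵥ b) = en b := rfl
          rw [this]
          ring
  have hbUB : en b ≤ UB Z y A := by
    rcases eq_or_lt_of_le (en_nonneg b) with h | h
    · rw [← h]; exact hUB0
    · have h2 : ((lZ - lA') * en b) * en b ≤
          (Real.sqrt LZ * Real.sqrt (y ⬝ᵥ (A *ᵥ y))) * en b := by
        rw [show ((lZ - lA') * en b) * en b = (lZ - lA') * (en b * en b) from by ring]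
        exact hbb
      have h3 := (mul_le_mul_iff_of_pos_right h).mp h2
      rw [hXg] at h3
      exact (mul_le_mul_iff_of_pos_left hg).mp h3
  -- bound on the delta difference
  have hdeldiff : del Z y B - del Z y A = Zᵀ *ᵥ (E *ᵥ y) := by
    rw [del, del, hEdef, ← Matrix.sub_mulVec, ← Matrix.mul_sub, ← Matrix.mulVec_mulVec]
  have hR1 : en (del Z y B - del Z y A) ≤
      e * (Real.sqrt LZ * Real.sqrt (y ⬝ᵥ (A *ᵥ y))) := by
    rw [hdeldiff, hedef]
    exact keyD hA E Z hLZ0.le qSZup y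
  -- bound on D *ᵥ b
  have hDb : en ((gam Z y B - gam Z y A) *ᵥ b) ≤ (Δ * (lZ - lA')) * en b := by
    rw [hDeq]
    have hsplit : ((Zᵀ * E * Z) - (lB - lA') • 1) *ᵥ b =
        (Zᵀ * E * Z) *ᵥ b - (lB - lA') • b := by
      rw [Matrix.sub_mulVec, Matrix.smul_mulVec, Matrix.one_mulVec]
    rw [hsplit]
    have hsum : e * LZ + e * LW = Δ * (lZ - lA') := by
      rw [← hΔg]; ring
    calc en ((Zᵀ * E * Z) *ᵥ b - (lB - lA') • b)
        ≤ en ((Zᵀ * E * Z) *ᵥ b) + en ((lB - lA') • b) := en_sub_le _ _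
      _ ≤ (spec A⁻¹ * spec E * LZ) * en b + |lB - lA'| * en b := by
          apply add_le_add (keyV hA E Z hLZ0.le qSZup b)
          rw [en_smul]
      _ ≤ (e * LZ) * en b + (e * LW) * en b := by
          apply add_le_add
          · rw [hedef]
          · exact mul_le_mul_of_nonneg_right hWeyl (en_nonneg b)
      _ = (e * LZ + e * LW) * en b := by ring
      _ = (Δ * (lZ - lA')) * en b := by rw [hsum]
  -- final assembly
  set d := betahat Z y B - betahat Z y A with hddef
  have hgamBd : gam Z y B *ᵥ d =
      (del Z y B - del Z y A) - (gam Z y B - gam Z y A) *ᵥ b := by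
    rw [hddef, Matrix.mulVec_sub, hsolveB, Matrix.sub_mulVec, hsolveA]
    abel
  have hfin : ((1 - Δ) * (lZ - lA')) * (en d * en d) ≤
      en d * (2 * Δ * (lZ - lA') * UB Z y A) := by
    rw [en_sq]
    calc ((1 - Δ) * (lZ - lA')) * (d ⬝ᵥ d) ≤ d ⬝ᵥ (gam Z y B *ᵥ d) := qgamB d
      _ = d ⬝ᵥ ((del Z y B - del Z y A) - (gam Z y B - gam Z y A) *ᵥ b) := by rw [hgamBd]
      _ ≤ en d * en ((del Z y B - del Z y A) - (gam Z y B - gam Z y A) *ᵥ b) := dp_le _ _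
      _ ≤ en d * (en (del Z y B - del Z y A) + en ((gam Z y B - gam Z y A) *ᵥ b)) :=
          mul_le_mul_of_nonneg_left (en_sub_le _ _) (en_nonneg d)
      _ ≤ en d * (Δ * ((lZ - lA') * UB Z y A) + (Δ * (lZ - lA')) * UB Z y A) := by
          apply mul_le_mul_of_nonneg_left _ (en_nonneg d)
          apply add_le_add
          · calc en (del Z y B - del Z y A)
                ≤ e * (Real.sqrt LZ * Real.sqrt (y ⬝ᵥ (A *ᵥ y))) := hR1
              _ = e * ((lZ - lA') * UB Z y A) := by rw [hXg]
              _ ≤ Δ * ((lZ - lA') * UB Z y A) :=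
                  mul_le_mul_of_nonneg_right heΔ (mul_nonneg hg.le hUB0)
          · calc en ((gam Z y B - gam Z y A) *ᵥ b) ≤ (Δ * (lZ - lA')) * en b := hDb
              _ ≤ (Δ * (lZ - lA')) * UB Z y A :=
                  mul_le_mul_of_nonneg_left hbUB (mul_nonneg hΔ0 hg.le)
      _ = en d * (2 * Δ * (lZ - lA') * UB Z y A) := by ring
  have hvn : vnorm d = en d := vnorm_eq_en' d
  rw [hvn]
  rcases eq_or_lt_of_le (en_nonneg d) with h | h
  · rw [← h]
    exact mul_nonneg (div_nonneg (by linarith) (by linarith)) hUB0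
  · have h2 : (((1 - Δ) * (lZ - lA')) * en d) * en d ≤
        (2 * Δ * (lZ - lA') * UB Z y A) * en d := by
      rw [show (((1 - Δ) * (lZ - lA')) * en d) * en d =
        ((1 - Δ) * (lZ - lA')) * (en d * en d) from by ring,
        show (2 * Δ * (lZ - lA') * UB Z y A) * en d =
        en d * (2 * Δ * (lZ - lA') * UB Z y A) from by ring]
      exact hfin
    have h3 := (mul_le_mul_iff_of_pos_right h).mp h2
    have hpos : 0 < (1 - Δ) * (lZ - lA') := mul_pos (by linarith) hg
    have h4 : en d * ((1 - Δ) * (lZ - lA')) ≤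
        (2 * Δ / (1 - Δ) * UB Z y A) * ((1 - Δ) * (lZ - lA')) := by
      have hrhs : (2 * Δ / (1 - Δ) * UB Z y A) * ((1 - Δ) * (lZ - lA')) =
          2 * Δ * (lZ - lA') * UB Z y A := by
        have h1Δ : (1:ℝ) - Δ ≠ 0 := by linarith
        field_simp [h1Δ]
      rw [hrhs]
      linarith
    exact le_of_mul_le_mul_right h4 hpos
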